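/- Let h : M₃(ℝ) × M₃(ℝ) × (0,∞) → ℝ satisfy the coercivity bound h(F, C, δ) ≥ α(‖F‖ᵖ + ‖C‖^q + δʳ) + β for all (F, C, δ), where α > 0, β ∈ ℝ and p, q, r ≥ 1, and let G be a 3×3 real matrix with det G > 0. Then there exist α' > 0 and β' ∈ ℝ such that for all F ∈ GL⁺: (det G)·h(F G⁻¹, cof(F G⁻¹), det(F G⁻¹)) ≥ α'(‖F‖ᵖ + ‖cof F‖^q + (det F)ʳ) + β'. -/
import Mathlib


open Matrix

/-- The Frobenius norm of a 3×3 real matrix. -/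
noncomputable def frob (A : Matrix (Fin 3) (Fin 3) ℝ) : ℝ :=
  Real.sqrt (Matrix.trace (Aᵀ * A))

/-- GL⁺: the set of 3×3 real matrices with positive determinant. -/
def GLpos : Set (Matrix (Fin 3) (Fin 3) ℝ) := {F | 0 < F.det}

/-- The cofactor matrix of a 3×3 real matrix: `cof A = (det A) (A⁻¹)ᵀ`. -/
noncomputable def cof (A : Matrix (Fin 3) (Fin 3) ℝ) : Matrix (Fin 3) (Fin 3) ℝ :=
  A.det • (A⁻¹)ᵀ

section Aux

attribute [local instance] Matrix.frobeniusNormedAddCommGroup Matrix.frobeniusNormedRing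

lemma frob_eq_norm (A : Matrix (Fin 3) (Fin 3) ℝ) : frob A = ‖A‖ := by
  rw [Matrix.frobenius_norm_def, frob]
  have htr : Matrix.trace (Aᵀ * A) = ∑ j, ∑ i, ‖A i j‖ ^ (2 : ℝ) := by
    simp only [Matrix.trace, Matrix.diag, Matrix.mul_apply, Matrix.transpose_apply,
      Real.norm_eq_abs, Real.rpow_two, sq_abs, sq, abs_mul_abs_self]
  rw [htr, Finset.sum_comm, Real.sqrt_eq_rpow]

lemma frob_nonneg (A : Matrix (Fin 3) (Fin 3) ℝ) : 0 ≤ frob A := by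
  rw [frob_eq_norm]; exact norm_nonneg _

lemma frob_mul_le (A B : Matrix (Fin 3) (Fin 3) ℝ) : frob (A * B) ≤ frob A * frob B := by
  simp only [frob_eq_norm]; exact norm_mul_le A B

lemma frob_pos {A : Matrix (Fin 3) (Fin 3) ℝ} (hA : A ≠ 0) : 0 < frob A := by
  rw [frob_eq_norm]; exact norm_pos_iff.mpr hA

end Aux

lemma cof_mul (A B : Matrix (Fin 3) (Fin 3) ℝ) : cof (A * B) = cof A * cof B := by
  simp only [cof, Matrix.det_mul, Matrix.mul_inv_rev, Matrix.transpose_mul,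
    Matrix.smul_mul, Matrix.mul_smul, smul_smul, mul_comm]

lemma cof_ne_zero {G : Matrix (Fin 3) (Fin 3) ℝ} (hG : 0 < G.det) : cof G ≠ 0 := by
  intro h0
  have hdet : IsUnit G.det := isUnit_iff_ne_zero.mpr hG.ne'
  have hinv : (G⁻¹)ᵀ = 0 := by
    have := h0
    rw [cof] at this
    exact (smul_eq_zero.mp this).resolve_left hG.ne' 
  have : G⁻¹ = 0 := by
    have := congrArg Matrix.transpose hinv
    simpa using this
  have h1 : (G⁻¹ * G) = 1 := Matrix.nonsing_inv_mul G hdet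
  rw [this, Matrix.zero_mul] at h1
  exact one_ne_zero h1.symm

/-- Coercivity of the relaxed energy transfers (with modified constants) to the energy
distorted by a fixed `G` with `det G > 0`. -/
theorem coercivity_inherited_by_distortion
    (h : Matrix (Fin 3) (Fin 3) ℝ × Matrix (Fin 3) (Fin 3) ℝ × ℝ → ℝ)
    (α β p q r : ℝ) (hα : 0 < α) (hp : 1 ≤ p) (hq : 1 ≤ q) (hr : 1 ≤ r)
    (hcoer : ∀ F C : Matrix (Fin 3) (Fin 3) ℝ, ∀ δ : ℝ, 0 < δ →
      α * (frob F ^ p + frob C ^ q + δ ^ r) + β ≤ h (F, C, δ))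
    (G : Matrix (Fin 3) (Fin 3) ℝ) (hG : 0 < G.det) :
    ∃ α' : ℝ, 0 < α' ∧ ∃ β' : ℝ, ∀ F ∈ GLpos,
      α' * (frob F ^ p + frob (cof F) ^ q + F.det ^ r) + β' ≤
        G.det * h (F * G⁻¹, cof (F * G⁻¹), (F * G⁻¹).det) := by
  have hGne : G ≠ 0 := by
    intro h0; rw [h0] at hG; simp at hG
  have hdetu : IsUnit G.det := isUnit_iff_ne_zero.mpr hG.ne'
  have hfG : 0 < frob G := frob_pos hGne
  have hfcG : 0 < frob (cof G) := frob_pos (cof_ne_zero hG)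
  set a : ℝ := (frob G) ^ p with ha_def
  set b : ℝ := (frob (cof G)) ^ q with hb_def
  set c : ℝ := G.det ^ r with hc_def
  have ha : 0 < a := Real.rpow_pos_of_pos hfG p
  have hb : 0 < b := Real.rpow_pos_of_pos hfcG q
  have hc : 0 < c := Real.rpow_pos_of_pos hG r
  set m : ℝ := min a⁻¹ (min b⁻¹ c⁻¹) with hm_def
  have hm : 0 < m := lt_min (inv_pos.mpr ha) (lt_min (inv_pos.mpr hb) (inv_pos.mpr hc))
  refine ⟨G.det * (α * m), by positivity, G.det * β, ?_⟩
  intro F hF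
  have hFdet : 0 < F.det := hF
  -- F = (F * G⁻¹) * G
  have hFG : (F * G⁻¹) * G = F := by
    rw [Matrix.mul_assoc, Matrix.nonsing_inv_mul G hdetu, Matrix.mul_one]
  -- bound on frob F
  have h1 : frob F ^ p / a ≤ frob (F * G⁻¹) ^ p := by
    rw [div_le_iff₀ ha]
    have : frob F ≤ frob (F * G⁻¹) * frob G := by
      conv_lhs => rw [← hFG]
      exact frob_mul_le _ _
    calc frob F ^ p ≤ (frob (F * G⁻¹) * frob G) ^ p :=
          Real.rpow_le_rpow (frob_nonneg F) this (by linarith)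
      _ = frob (F * G⁻¹) ^ p * a := by
          rw [Real.mul_rpow (frob_nonneg _) hfG.le]
  -- bound on frob (cof F)
  have hcofF : cof (F * G⁻¹) * cof G = cof F := by
    rw [← cof_mul, hFG]
  have h2 : frob (cof F) ^ q / b ≤ frob (cof (F * G⁻¹)) ^ q := by
    rw [div_le_iff₀ hb]
    have : frob (cof F) ≤ frob (cof (F * G⁻¹)) * frob (cof G) := by
      conv_lhs => rw [← hcofF]
      exact frob_mul_le _ _
    calc frob (cof F) ^ q ≤ (frob (cof (F * G⁻¹)) * frob (cof G)) ^ q :=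
          Real.rpow_le_rpow (frob_nonneg _) this (by linarith)
      _ = frob (cof (F * G⁻¹)) ^ q * b := by
          rw [Real.mul_rpow (frob_nonneg _) hfcG.le]
  -- determinant
  have hdetFG : (F * G⁻¹).det = F.det / G.det := by
    rw [Matrix.det_mul, Matrix.det_nonsing_inv, Ring.inverse_eq_inv, div_eq_mul_inv]
  have hdpos : 0 < (F * G⁻¹).det := by
    rw [hdetFG]; positivity
  have h3 : F.det ^ r / c ≤ (F * G⁻¹).det ^ r := by
    rw [hdetFG, Real.div_rpow hFdet.le hG.le, hc_def]
  -- key coercivity at the distorted point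
  have hkey := hcoer (F * G⁻¹) (cof (F * G⁻¹)) ((F * G⁻¹).det) hdpos
  have hA : 0 ≤ frob F ^ p := Real.rpow_nonneg (frob_nonneg F) p
  have hB : 0 ≤ frob (cof F) ^ q := Real.rpow_nonneg (frob_nonneg _) q
  have hC : 0 ≤ F.det ^ r := Real.rpow_nonneg hFdet.le r
  have hma : m ≤ a⁻¹ := min_le_left _ _
  have hmb : m ≤ b⁻¹ := le_trans (min_le_right _ _) (min_le_left _ _)
  have hmc : m ≤ c⁻¹ := le_trans (min_le_right _ _) (min_le_right _ _)
  have hsum : m * (frob F ^ p + frob (cof F) ^ q + F.det ^ r) ≤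
      frob (F * G⁻¹) ^ p + frob (cof (F * G⁻¹)) ^ q + (F * G⁻¹).det ^ r := by
    have e1 : m * (frob F ^ p) ≤ frob F ^ p / a := by
      rw [div_eq_inv_mul]; exact mul_le_mul_of_nonneg_right hma hA
    have e2 : m * (frob (cof F) ^ q) ≤ frob (cof F) ^ q / b := by
      rw [div_eq_inv_mul]; exact mul_le_mul_of_nonneg_right hmb hB
    have e3 : m * (F.det ^ r) ≤ F.det ^ r / c := by
      rw [div_eq_inv_mul]; exact mul_le_mul_of_nonneg_right hmc hC
    nlinarith [h1, h2, h3]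
  have hstep : α * (m * (frob F ^ p + frob (cof F) ^ q + F.det ^ r)) + β ≤
      h (F * G⁻¹, cof (F * G⁻¹), (F * G⁻¹).det) := by
    refine le_trans ?_ hkey
    have := mul_le_mul_of_nonneg_left hsum hα.le
    linarith
  calc G.det * (α * m) * (frob F ^ p + frob (cof F) ^ q + F.det ^ r) + G.det * β
      = G.det * (α * (m * (frob F ^ p + frob (cof F) ^ q + F.det ^ r)) + β) := by ring
    _ ≤ G.det * h (F * G⁻¹, cof (F * G⁻¹), (F * G⁻¹).det) :=
        mul_le_mul_of_nonneg_left hstep hG.le
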